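/- Let ω_max, k, T > 0 and μ ∈ (0,1). Let ω : ℝ → ℝ³ be continuous with |ω(t)| ≤ ω_max for all t, and let a : ℝ → ℝ³ be differentiable with |a(t)| = 1 and a'(t) = a(t) × ω(t) for all t. Assume the persistent excitation condition: for all t, (1/T)·∫_t^{t+T} [a(τ)]ₓᵀ[a(τ)]ₓ dτ ≥ μ·I. Define the 6×6 matrix A(t) with blocks A(t) = [[−I, [a(t)]ₓ],[[a(t)]ₓ, 0]]. Then there exists c ∈ (0,1), depending only on T, μ, k, ω_max, such that every solution Z : ℝ → ℝ⁶ of Z'(t) = k·A(t)·Z(t) satisfies |Z(t)|² ≤ c^N·|Z(t₀)|² for every integer N ≥ 0 and every t ∈ [t₀ + N·T, t₀ + (N+1)·T], for any initial time t₀ and initial condition Z(t₀). -/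

import Mathlib

open Matrix MeasureTheory intervalIntegral

noncomputable section

attribute [local instance] Matrix.normedAddCommGroup Matrix.normedSpace

/-- Cross product on ℝ³. -/
def cross3 (x y : Fin 3 → ℝ) : Fin 3 → ℝ :=
  ![x 1 * y 2 - x 2 * y 1, x 2 * y 0 - x 0 * y 2, x 0 * y 1 - x 1 * y 0]

/-- Euclidean norm on ℝ³. -/
def enorm3 (x : Fin 3 → ℝ) : ℝ := Real.sqrt (∑ i, (x i) ^ 2)

/-- Skew-symmetric cross-product matrix `[x]ₓ`. -/
def skew3 (x : Fin 3 → ℝ) : Matrix (Fin 3) (Fin 3) ℝ :=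
  !![0, -x 2, x 1; x 2, 0, -x 0; -x 1, x 0, 0]

/-- Persistent excitation condition with parameters `T, μ`. -/
def PE (a : ℝ → Fin 3 → ℝ) (T μ : ℝ) : Prop :=
  ∀ t : ℝ,
    ((T⁻¹ • ∫ τ in t..(t + T), (skew3 (a τ))ᵀ * skew3 (a τ)) -
      μ • (1 : Matrix (Fin 3) (Fin 3) ℝ)).PosSemidef

/-- Squared Euclidean norm on ℝ⁶ = ℝ³ × ℝ³. -/
def nrm6sq (Z : Fin 3 ⊕ Fin 3 → ℝ) : ℝ := ∑ i, (Z i) ^ 2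

/-- The 6×6 block matrix `A = [[−I, [a]ₓ], [[a]ₓ, 0]]`. -/
def Amat (a : Fin 3 → ℝ) : Matrix (Fin 3 ⊕ Fin 3) (Fin 3 ⊕ Fin 3) ℝ :=
  Matrix.fromBlocks (-1) (skew3 a) (skew3 a) 0

/-! ### Auxiliary lemmas -/

lemma hasDerivAt_cross3 {f g : ℝ → Fin 3 → ℝ} {f' g' : Fin 3 → ℝ} {t : ℝ}
    (hf : ∀ i, HasDerivAt (fun t => f t i) (f' i) t)
    (hg : ∀ i, HasDerivAt (fun t => g t i) (g' i) t) (i : Fin 3) :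
    HasDerivAt (fun t => cross3 (f t) (g t) i) (cross3 f' (g t) i + cross3 (f t) g' i) t := by
  fin_cases i
  · show HasDerivAt (fun t => f t 1 * g t 2 - f t 2 * g t 1)
      (f' 1 * g t 2 - f' 2 * g t 1 + (f t 1 * g' 2 - f t 2 * g' 1)) t
    exact (((hf 1).mul (hg 2)).sub ((hf 2).mul (hg 1))).congr_deriv (by ring)
  · show HasDerivAt (fun t => f t 2 * g t 0 - f t 0 * g t 2)
      (f' 2 * g t 0 - f' 0 * g t 2 + (f t 2 * g' 0 - f t 0 * g' 2)) t
    exact (((hf 2).mul (hg 0)).sub ((hf 0).mul (hg 2))).congr_deriv (by ring)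
  · show HasDerivAt (fun t => f t 0 * g t 1 - f t 1 * g t 0)
      (f' 0 * g t 1 - f' 1 * g t 0 + (f t 0 * g' 1 - f t 1 * g' 0)) t
    exact (((hf 0).mul (hg 1)).sub ((hf 1).mul (hg 0))).congr_deriv (by ring)

lemma cont_cross3 {f g : ℝ → Fin 3 → ℝ} (hf : ∀ i, Continuous fun t => f t i)
    (hg : ∀ i, Continuous fun t => g t i) (i : Fin 3) :
    Continuous fun t => cross3 (f t) (g t) i := by
  fin_cases i
  · show Continuous fun t => f t 1 * g t 2 - f t 2 * g t 1
    exact ((hf 1).mul (hg 2)).sub ((hf 2).mul (hg 1))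
  · show Continuous fun t => f t 2 * g t 0 - f t 0 * g t 2
    exact ((hf 2).mul (hg 0)).sub ((hf 0).mul (hg 2))
  · show Continuous fun t => f t 0 * g t 1 - f t 1 * g t 0
    exact ((hf 0).mul (hg 1)).sub ((hf 1).mul (hg 0))

lemma cross3_sq_le (b v : Fin 3 → ℝ) :
    ∑ i, (cross3 b v i)^2 ≤ (∑ i, (b i)^2) * ∑ i, (v i)^2 := by
  simp [cross3, Fin.sum_univ_three]
  nlinarith [sq_nonneg (b 0 * v 0 + b 1 * v 1 + b 2 * v 2)]

lemma cs3 (u v : Fin 3 → ℝ) : (∑ i, u i * v i)^2 ≤ (∑ i, (u i)^2) * ∑ i, (v i)^2 := by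
  simp [Fin.sum_univ_three]
  nlinarith [sq_nonneg (u 0 * v 1 - u 1 * v 0), sq_nonneg (u 0 * v 2 - u 2 * v 0),
    sq_nonneg (u 1 * v 2 - u 2 * v 1)]

lemma cross3_sub_right (b u v : Fin 3 → ℝ) (i : Fin 3) :
    cross3 b u i = cross3 b v i + cross3 b (fun j => u j - v j) i := by
  fin_cases i
  · show b 1 * u 2 - b 2 * u 1 = (b 1 * v 2 - b 2 * v 1) + (b 1 * (u 2 - v 2) - b 2 * (u 1 - v 1))
    ring
  · show b 2 * u 0 - b 0 * u 2 = (b 2 * v 0 - b 0 * v 2) + (b 2 * (u 0 - v 0) - b 0 * (u 2 - v 2))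
    ring
  · show b 0 * u 1 - b 1 * u 0 = (b 0 * v 1 - b 1 * v 0) + (b 0 * (u 1 - v 1) - b 1 * (u 0 - v 0))
    ring

lemma abs_le_of_sq_le_sq3 {x y : ℝ} (h : x^2 ≤ y^2) (hy : 0 ≤ y) : |x| ≤ y := by
  have h2 := Real.sqrt_le_sqrt h
  rwa [Real.sqrt_sq_eq_abs, Real.sqrt_sq hy] at h2

lemma abs_sub_le_of_hasDerivAt {f f' : ℝ → ℝ} {s : Set ℝ} (hs : Convex ℝ s)
    (hf : ∀ t ∈ s, HasDerivAt f (f' t) t) {C : ℝ} (hb : ∀ t ∈ s, |f' t| ≤ C)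
    {x y : ℝ} (hx : x ∈ s) (hy : y ∈ s) : |f y - f x| ≤ C * |y - x| := by
  have := hs.norm_image_sub_le_of_norm_hasDerivWithin_le
    (fun t ht => (hf t ht).hasDerivWithinAt) (fun t ht => by simpa using hb t ht) hx hy
  simpa [Real.norm_eq_abs] using this

lemma Amat_mulVec_inl (b : Fin 3 → ℝ) (v : Fin 3 ⊕ Fin 3 → ℝ) (i : Fin 3) :
    (Amat b).mulVec v (Sum.inl i) = -(v (Sum.inl i)) + cross3 b (fun j => v (Sum.inr j)) i := by
  fin_cases i <;>
    simp [Amat, skew3, cross3, Matrix.mulVec, dotProduct, Fintype.sum_sum_type,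
      Fin.sum_univ_three, Matrix.fromBlocks, Matrix.one_apply] <;> ring

lemma Amat_mulVec_inr (b : Fin 3 → ℝ) (v : Fin 3 ⊕ Fin 3 → ℝ) (i : Fin 3) :
    (Amat b).mulVec v (Sum.inr i) = cross3 b (fun j => v (Sum.inl j)) i := by
  fin_cases i <;>
    simp [Amat, skew3, cross3, Matrix.mulVec, dotProduct, Fintype.sum_sum_type,
      Fin.sum_univ_three, Matrix.fromBlocks, Matrix.one_apply] <;> ring

/-- quadratic form in a matrix, as a linear map -/
def qform (y : Fin 3 → ℝ) : Matrix (Fin 3) (Fin 3) ℝ →ₗ[ℝ] ℝ where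
  toFun M := y ⬝ᵥ M *ᵥ y
  map_add' M N := by simp [Matrix.add_mulVec, dotProduct_add]
  map_smul' c M := by simp [Matrix.smul_mulVec, dotProduct_smul]

lemma skew3_cont {a : ℝ → Fin 3 → ℝ} (ha : Continuous a) :
    Continuous fun τ => (skew3 (a τ))ᵀ * skew3 (a τ) := by
  have h1 : Continuous fun τ => skew3 (a τ) := by
    apply continuous_matrix
    intro i j
    fin_cases i <;> fin_cases j <;> simp [skew3] <;> fun_prop
  exact h1.matrix_transpose.matrix_mul h1

lemma PE_lower {a : ℝ → Fin 3 → ℝ} {T μ : ℝ} (hT : 0 < T) (hPE : PE a T μ)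
    (ha : Continuous a) (s : ℝ) (y : Fin 3 → ℝ) :
    μ * T * (∑ i, (y i)^2) ≤ ∫ τ in s..(s+T), ∑ i, (cross3 (a τ) y i)^2 := by
  have h2 := (hPE s).dotProduct_mulVec_nonneg y
  have hstar : star y = y := by simp
  rw [hstar] at h2
  have hL := ((qform y).toContinuousLinearMap).intervalIntegral_comp_comm (μ := volume) ((skew3_cont ha).intervalIntegrable s (s+T))
  have hq : ∀ M : Matrix (Fin 3) (Fin 3) ℝ, (qform y).toContinuousLinearMap M = y ⬝ᵥ M *ᵥ y := by
    intro M; rfl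
  have hform : ∀ τ, y ⬝ᵥ ((skew3 (a τ))ᵀ * skew3 (a τ)) *ᵥ y = ∑ i, (cross3 (a τ) y i)^2 := by
    intro τ
    simp [skew3, cross3, Matrix.mulVec, dotProduct, Matrix.mul_apply, Matrix.transpose,
      Fin.sum_univ_three]
    ring
  rw [Matrix.sub_mulVec, Matrix.smul_mulVec, Matrix.smul_mulVec] at h2
  simp only [dotProduct_sub, dotProduct_smul, Matrix.one_mulVec] at h2
  rw [← hq] at h2
  erw [← hL] at h2
  erw [integral_congr (fun τ _ => (hq _).trans (hform τ))] at h2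
  have hyy : y ⬝ᵥ y = ∑ i, (y i)^2 := by simp [dotProduct, sq]
  rw [hyy] at h2
  simp only [smul_eq_mul, inv_mul_eq_div] at h2
  have h3 : μ * ∑ i, (y i)^2 ≤ (∫ τ in s..(s+T), ∑ i, (cross3 (a τ) y i)^2) / T := by linarith
  have h4 := (le_div_iff₀ hT).mp h3
  linarith

/-! ### Scalar observables of a solution -/

def pc (Z : ℝ → Fin 3 ⊕ Fin 3 → ℝ) (t : ℝ) (i : Fin 3) : ℝ := Z t (Sum.inl i)
def qc (Z : ℝ → Fin 3 ⊕ Fin 3 → ℝ) (t : ℝ) (i : Fin 3) : ℝ := Z t (Sum.inr i)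
def nxf (Z : ℝ → Fin 3 ⊕ Fin 3 → ℝ) (t : ℝ) : ℝ := ∑ i, (pc Z t i)^2
def nyf (Z : ℝ → Fin 3 ⊕ Fin 3 → ℝ) (t : ℝ) : ℝ := ∑ i, (qc Z t i)^2
def Vff (Z : ℝ → Fin 3 ⊕ Fin 3 → ℝ) (t : ℝ) : ℝ := nxf Z t + nyf Z t
def Wf (a : ℝ → Fin 3 → ℝ) (Z : ℝ → Fin 3 ⊕ Fin 3 → ℝ) (t : ℝ) : Fin 3 → ℝ :=
  cross3 (a t) (qc Z t)
def nwf (a : ℝ → Fin 3 → ℝ) (Z : ℝ → Fin 3 ⊕ Fin 3 → ℝ) (t : ℝ) : ℝ := ∑ i, (Wf a Z t i)^2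
def Gf (a : ℝ → Fin 3 → ℝ) (Z : ℝ → Fin 3 ⊕ Fin 3 → ℝ) (t : ℝ) : ℝ :=
  ∑ i, Wf a Z t i * pc Z t i
def DWf (a ω : ℝ → Fin 3 → ℝ) (k : ℝ) (Z : ℝ → Fin 3 ⊕ Fin 3 → ℝ) (t : ℝ) : ℝ :=
  ∑ i, (cross3 (cross3 (a t) (ω t)) (qc Z t) i
        + cross3 (a t) (fun j => k * cross3 (a t) (pc Z t) j) i) * pc Z t i

/-! ### The per-period energy lemma -/

set_option maxHeartbeats 2000000 in
lemma per_period
    (ωmax k T μ : ℝ) (hk : 0 < k) (hT : 0 < T) (hμ0 : 0 < μ)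
    (ω a : ℝ → Fin 3 → ℝ)
    (hωc : Continuous ω)
    (hωn : ∀ t, ∑ i, (ω t i)^2 ≤ ωmax^2)
    (han : ∀ t, ∑ i, (a t i)^2 = 1)
    (had' : ∀ (i : Fin 3) (t : ℝ), HasDerivAt (fun t => a t i) (cross3 (a t) (ω t) i) t)
    (hPE : PE a T μ)
    (M₂ K₄ θ h ε : ℝ)
    (hM₂ : M₂ = 2*(ωmax^2+k^2)) (hK₄ : K₄ = (2 + T*((M₂+1)/2 + k))/k)
    (hθ0 : 0 < θ) (hθ1 : θ ≤ 1/2)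
    (hC3 : 2*θ*K₄ ≤ μ*T/8) (hC4 : 6*k^2*T^3*θ^2 ≤ μ*T/8)
    (hh0 : 0 < h) (hhT : h ≤ T/2) (hhk : 8*k*h ≤ θ^2) (hεdef : ε = θ^2*h/2)
    (Z : ℝ → Fin 3 ⊕ Fin 3 → ℝ)
    (hP : ∀ (i : Fin 3) (t : ℝ), HasDerivAt (fun t => pc Z t i)
        (k * (-(pc Z t i) + cross3 (a t) (qc Z t) i)) t)
    (hQ : ∀ (i : Fin 3) (t : ℝ), HasDerivAt (fun t => qc Z t i)
        (k * cross3 (a t) (pc Z t) i) t)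
    (hmono : Antitone (Vff Z))
    (s : ℝ) :
    ε * Vff Z s ≤ ∫ τ in s..(s+T), nxf Z τ := by
  -- continuity facts
  have hca : ∀ i, Continuous fun t => a t i :=
    fun i => Differentiable.continuous (fun t => (had' i t).differentiableAt)
  have hacont : Continuous a := continuous_pi hca
  have hcω : ∀ i, Continuous fun t => ω t i := fun i => (continuous_apply i).comp hωc
  have hcP : ∀ i, Continuous fun t => pc Z t i :=
    fun i => Differentiable.continuous (fun t => (hP i t).differentiableAt)
  have hcQ : ∀ i, Continuous fun t => qc Z t i :=
    fun i => Differentiable.continuous (fun t => (hQ i t).differentiableAt)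
  have hcW : ∀ i, Continuous fun t => Wf a Z t i := fun i => cont_cross3 hca hcQ i
  have hcnx : Continuous (nxf Z) := by
    unfold nxf; exact continuous_finset_sum _ fun i _ => (hcP i).pow 2
  have hcnw : Continuous (nwf a Z) := by
    unfold nwf; exact continuous_finset_sum _ fun i _ => (hcW i).pow 2
  have hcG : Continuous (Gf a Z) := by
    unfold Gf; exact continuous_finset_sum _ fun i _ => (hcW i).mul (hcP i)
  have hca' : ∀ i, Continuous fun t => cross3 (a t) (ω t) i := fun i => cont_cross3 hca hcω i
  have hcdw1 : ∀ i, Continuous fun t => cross3 (cross3 (a t) (ω t)) (qc Z t) i :=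
    fun i => cont_cross3 hca' hcQ i
  have hcinner : ∀ j, Continuous fun t => k * cross3 (a t) (pc Z t) j :=
    fun j => continuous_const.mul (cont_cross3 hca hcP j)
  have hcdw2 : ∀ i, Continuous fun t => cross3 (a t) (fun j => k * cross3 (a t) (pc Z t) j) i :=
    fun i => cont_cross3 hca hcinner i
  have hcDW : Continuous (DWf a ω k Z) := by
    unfold DWf; exact continuous_finset_sum _ fun i _ => ((hcdw1 i).add (hcdw2 i)).mul (hcP i)
  -- nonnegativity
  have hnx0 : ∀ t, 0 ≤ nxf Z t := fun t => Finset.sum_nonneg fun i _ => sq_nonneg _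
  have hny0 : ∀ t, 0 ≤ nyf Z t := fun t => Finset.sum_nonneg fun i _ => sq_nonneg _
  have hnw0 : ∀ t, 0 ≤ nwf a Z t := fun t => Finset.sum_nonneg fun i _ => sq_nonneg _
  have hnxle : ∀ t, nxf Z t ≤ Vff Z t := fun t => by unfold Vff; linarith [hny0 t]
  have hnyle : ∀ t, nyf Z t ≤ Vff Z t := fun t => by unfold Vff; linarith [hnx0 t]
  have hnwle : ∀ t, nwf a Z t ≤ nyf Z t := by
    intro t
    have hcs := cross3_sq_le (a t) (qc Z t)
    rw [han t] at hcs
    unfold nwf Wf nyf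
    linarith [hcs]
  -- derivatives of the scalar functions
  have hnxd : ∀ t, HasDerivAt (nxf Z) (2*k*(Gf a Z t - nxf Z t)) t := by
    intro t
    have h1 := HasDerivAt.fun_sum (u := Finset.univ) (fun i _ => (hP i t).pow 2)
    unfold nxf Gf Wf
    refine h1.congr_deriv ?_
    simp [Fin.sum_univ_three, pow_one]
    ring
  -- main setup
  by_contra hcon
  push_neg at hcon
  have hss : s ≤ s + T := by linarith
  have hIntnx : IntervalIntegrable (nxf Z) volume s (s+T) := hcnx.intervalIntegrable _ _
  have hE0 : 0 ≤ ∫ τ in s..(s+T), nxf Z τ := integral_nonneg hss (fun u _ => hnx0 u)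
  have hεpos : 0 < ε := by rw [hεdef]; positivity
  have hVs0 : 0 ≤ Vff Z s := by unfold Vff; linarith [hnx0 s, hny0 s]
  have hVpos : 0 < Vff Z s := by
    rcases lt_or_eq_of_le hVs0 with h' | h'
    · exact h'
    · exfalso; rw [← h'] at hcon; simp at hcon; linarith
  have hVleD : ∀ τ, s ≤ τ → Vff Z τ ≤ Vff Z s := fun τ hτ => hmono hτ
  have hGsq : ∀ τ, (Gf a Z τ)^2 ≤ nwf a Z τ * nxf Z τ := by
    intro τ; unfold Gf nwf nxf; exact cs3 _ _
  -- Lipschitz bound for nx on [s, s+T]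
  have hnxlipb : ∀ r ∈ Set.Icc s (s+T), |2*k*(Gf a Z r - nxf Z r)| ≤ 4*k*Vff Z s := by
    intro r hr
    have h1 : nxf Z r ≤ Vff Z s := le_trans (hnxle r) (hVleD r hr.1)
    have h2 : nwf a Z r ≤ Vff Z s := le_trans (le_trans (hnwle r) (hnyle r)) (hVleD r hr.1)
    have h4 : |Gf a Z r| ≤ Vff Z s := by
      apply abs_le_of_sq_le_sq3 _ hVs0
      nlinarith [hGsq r, hnx0 r, hnw0 r]
    have h5 := abs_le.mp h4
    rw [abs_mul, abs_of_nonneg (by positivity : (0:ℝ) ≤ 2*k)]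
    have h6 : |Gf a Z r - nxf Z r| ≤ 2*Vff Z s := by
      rw [abs_le]; constructor <;> nlinarith [hnx0 r]
    nlinarith
  have hnxlip : ∀ τ₁ ∈ Set.Icc s (s+T), ∀ τ₂ ∈ Set.Icc s (s+T),
      |nxf Z τ₂ - nxf Z τ₁| ≤ 4*k*Vff Z s * |τ₂ - τ₁| := by
    intro τ₁ hτ₁ τ₂ hτ₂
    exact abs_sub_le_of_hasDerivAt (convex_Icc _ _) (fun r _ => hnxd r) hnxlipb hτ₁ hτ₂
  -- Step 1 : pointwise bound on nx
  have hpt : ∀ τ ∈ Set.Icc s (s+T), nxf Z τ ≤ θ^2 * Vff Z s := by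
    have main : ∀ u τ, s ≤ u → u + h ≤ s + T → u ≤ τ → τ ≤ u + h → nxf Z τ ≤ θ^2 * Vff Z s := by
      intro u τ hu1 hu2 hu3 hu4
      have hτD : τ ∈ Set.Icc s (s+T) := ⟨by linarith, by linarith⟩
      have hlow : (nxf Z τ - 4*k*Vff Z s*h) * h ≤ ∫ r in u..(u+h), nxf Z r := by
        have hbd : ∀ r ∈ Set.Icc u (u+h), nxf Z τ - 4*k*Vff Z s*h ≤ nxf Z r := by
          intro r hr
          have hrD : r ∈ Set.Icc s (s+T) := ⟨by linarith [hr.1], by linarith [hr.2]⟩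
          have hl := hnxlip τ hτD r hrD
          have habs : |r - τ| ≤ h := by
            rw [abs_le]; constructor <;> [linarith [hr.1]; linarith [hr.2]]
          have h4kV : (0:ℝ) ≤ 4*k*Vff Z s := by positivity
          have := abs_le.mp hl
          nlinarith [mul_le_mul_of_nonneg_left habs h4kV]
        calc (nxf Z τ - 4*k*Vff Z s*h) * h
            = ∫ _ in u..(u+h), (nxf Z τ - 4*k*Vff Z s*h) := by
              rw [intervalIntegral.integral_const]; simp; ring
          _ ≤ ∫ r in u..(u+h), nxf Z r := by
              apply integral_mono_on (by linarith) (intervalIntegrable_const)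
                (hcnx.intervalIntegrable _ _) hbd
      have hup : ∫ r in u..(u+h), nxf Z r ≤ ∫ τ in s..(s+T), nxf Z τ := by
        apply integral_mono_interval hu1 (by linarith) hu2
          (Filter.Eventually.of_forall (fun r => hnx0 r)) hIntnx
      have hkey : (nxf Z τ - 4*k*Vff Z s*h) * h ≤ ε * Vff Z s := by
        calc (nxf Z τ - 4*k*Vff Z s*h) * h ≤ ∫ r in u..(u+h), nxf Z r := hlow
          _ ≤ ∫ τ in s..(s+T), nxf Z τ := hup
          _ ≤ ε * Vff Z s := hcon.le
      rw [hεdef] at hkey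
      have haux : 4*k*Vff Z s*h*h ≤ θ^2*Vff Z s*h/2 := by
        nlinarith [mul_nonneg hVs0 hh0.le]
      have hfin : nxf Z τ * h ≤ θ^2 * Vff Z s * h := by nlinarith
      exact le_of_mul_le_mul_right (by linarith) hh0
    intro τ hτ
    rcases le_or_gt (τ + h) (s + T) with hcase | hcase
    · exact main τ τ hτ.1 hcase le_rfl (by linarith)
    · exact main (τ - h) τ (by linarith [hτ.2]) (by linarith [hτ.2]) (by linarith) (by linarith)
  -- Step 2 : y moves slowly
  have hsV := Real.sq_sqrt hVs0
  have hsV0 := Real.sqrt_nonneg (Vff Z s)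
  have hΔq : ∀ τ ∈ Set.Icc s (s+T), ∀ i,
      |qc Z τ i - qc Z s i| ≤ k*θ*Real.sqrt (Vff Z s)*T := by
    intro τ hτ i
    have hb : ∀ r ∈ Set.Icc s (s+T),
        |k * cross3 (a r) (pc Z r) i| ≤ k*(θ*Real.sqrt (Vff Z s)) := by
      intro r hr
      have h1 : (cross3 (a r) (pc Z r) i)^2 ≤ ∑ j, (cross3 (a r) (pc Z r) j)^2 :=
        Finset.single_le_sum (f := fun j => (cross3 (a r) (pc Z r) j)^2)
          (fun j _ => sq_nonneg _) (Finset.mem_univ i)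
      have h2 : ∑ j, (cross3 (a r) (pc Z r) j)^2 ≤ nxf Z r := by
        have hcs := cross3_sq_le (a r) (pc Z r)
        rw [han r] at hcs
        unfold nxf
        linarith [hcs]
      have h3 : nxf Z r ≤ θ^2*Vff Z s := hpt r hr
      have h4 : |cross3 (a r) (pc Z r) i| ≤ θ*Real.sqrt (Vff Z s) := by
        apply abs_le_of_sq_le_sq3 _ (by positivity)
        have : (θ*Real.sqrt (Vff Z s))^2 = θ^2*Vff Z s := by
          rw [mul_pow, hsV]
        rw [this]; linarith
      rw [abs_mul, abs_of_nonneg hk.le]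
      exact mul_le_mul_of_nonneg_left h4 hk.le
    have hL := abs_sub_le_of_hasDerivAt (convex_Icc s (s+T)) (fun r _ => hQ i r) hb
      (Set.left_mem_Icc.mpr hss) hτ
    have habs : |τ - s| ≤ T := by
      rw [abs_le]; constructor <;> [linarith [hτ.1]; linarith [hτ.2]]
    calc |qc Z τ i - qc Z s i| ≤ k*(θ*Real.sqrt (Vff Z s)) * |τ - s| := hL
      _ ≤ k*(θ*Real.sqrt (Vff Z s)) * T := by
          apply mul_le_mul_of_nonneg_left habs (by positivity)
      _ = k*θ*Real.sqrt (Vff Z s)*T := by ring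
  have hΔqsq : ∀ τ ∈ Set.Icc s (s+T),
      ∑ i, (qc Z τ i - qc Z s i)^2 ≤ 3*(k^2*θ^2*T^2*Vff Z s) := by
    intro τ hτ
    have he : ∀ i : Fin 3, (qc Z τ i - qc Z s i)^2 ≤ k^2*θ^2*T^2*Vff Z s := by
      intro i
      have h1 := hΔq τ hτ i
      have h2 : (qc Z τ i - qc Z s i)^2 = |qc Z τ i - qc Z s i|^2 := (sq_abs _).symm
      rw [h2]
      calc |qc Z τ i - qc Z s i|^2 ≤ (k*θ*Real.sqrt (Vff Z s)*T)^2 := by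
            apply pow_le_pow_left₀ (abs_nonneg _) h1
        _ = k^2*θ^2*T^2*Vff Z s := by
            have : (k*θ*Real.sqrt (Vff Z s)*T)^2
                = k^2*θ^2*(Real.sqrt (Vff Z s))^2*T^2 := by ring
            rw [this, hsV]; ring
    calc ∑ i, (qc Z τ i - qc Z s i)^2 ≤ ∑ _i : Fin 3, k^2*θ^2*T^2*Vff Z s :=
          Finset.sum_le_sum (fun i _ => he i)
      _ = 3*(k^2*θ^2*T^2*Vff Z s) := by
          simp [Fin.sum_univ_three]
  -- Step 3 : bound on the integral of nw
  have hGd : ∀ τ, HasDerivAt (Gf a Z)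
      (DWf a ω k Z τ + k * nwf a Z τ - k * Gf a Z τ) τ := by
    intro τ
    have hWd : ∀ i, HasDerivAt (fun t => Wf a Z t i)
        (cross3 (cross3 (a τ) (ω τ)) (qc Z τ) i
          + cross3 (a τ) (fun j => k * cross3 (a τ) (pc Z τ) j) i) τ :=
      fun i => hasDerivAt_cross3 (fun j => had' j τ) (fun j => hQ j τ) i
    have h1 := HasDerivAt.fun_sum (u := Finset.univ) (fun i _ => (hWd i).mul (hP i τ))
    unfold Gf DWf nwf
    refine h1.congr_deriv ?_
    simp only [Wf, Fin.sum_univ_three]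
    ring
  have hGbD : ∀ τ ∈ Set.Icc s (s+T), |Gf a Z τ| ≤ θ*Vff Z s := by
    intro τ hτ
    apply abs_le_of_sq_le_sq3 _ (by positivity)
    have h1 := hGsq τ
    have h2 : nwf a Z τ ≤ Vff Z s := le_trans (le_trans (hnwle τ) (hnyle τ)) (hVleD τ hτ.1)
    have h3 : nxf Z τ ≤ θ^2*Vff Z s := hpt τ hτ
    nlinarith [hnw0 τ, hnx0 τ]
  have hDWbD : ∀ τ ∈ Set.Icc s (s+T), |DWf a ω k Z τ| ≤ θ*(M₂+1)*Vff Z s/2 := by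
    intro τ hτ
    have hdw : (DWf a ω k Z τ)^2 ≤ (∑ i, (cross3 (cross3 (a τ) (ω τ)) (qc Z τ) i
        + cross3 (a τ) (fun j => k * cross3 (a τ) (pc Z τ) j) i)^2) * nxf Z τ := by
      unfold DWf nxf; exact cs3 _ _
    have hA1 : ∑ i, (cross3 (cross3 (a τ) (ω τ)) (qc Z τ) i)^2 ≤ ωmax^2 * Vff Z s := by
      have h1 := cross3_sq_le (cross3 (a τ) (ω τ)) (qc Z τ)
      have h2 := cross3_sq_le (a τ) (ω τ)
      rw [han τ, one_mul] at h2
      have h3 : ∑ i, (ω τ i)^2 ≤ ωmax^2 := hωn τ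
      have h4 : nyf Z τ ≤ Vff Z s := le_trans (hnyle τ) (hVleD τ hτ.1)
      have h5 : (∑ i, (qc Z τ i)^2) = nyf Z τ := rfl
      nlinarith [Finset.sum_nonneg (fun i (_ : i ∈ Finset.univ) =>
        sq_nonneg (qc Z τ i)), Finset.sum_nonneg (fun i (_ : i ∈ Finset.univ) =>
        sq_nonneg (cross3 (a τ) (ω τ) i)), sq_nonneg ωmax]
    have hA2 : ∑ i, (cross3 (a τ) (fun j => k * cross3 (a τ) (pc Z τ) j) i)^2
        ≤ k^2 * Vff Z s := by
      have h1 := cross3_sq_le (a τ) (fun j => k * cross3 (a τ) (pc Z τ) j)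
      rw [han τ, one_mul] at h1
      have h2 : ∑ j, (k * cross3 (a τ) (pc Z τ) j)^2
          = k^2 * ∑ j, (cross3 (a τ) (pc Z τ) j)^2 := by
        rw [Finset.mul_sum]; congr 1; funext j; ring
      have h3 : ∑ j, (cross3 (a τ) (pc Z τ) j)^2 ≤ nxf Z τ := by
        have hcs := cross3_sq_le (a τ) (pc Z τ)
        rw [han τ] at hcs
        unfold nxf; linarith [hcs]
      have h4 : nxf Z τ ≤ Vff Z s := le_trans (hnxle τ) (hVleD τ hτ.1)
      calc ∑ i, (cross3 (a τ) (fun j => k * cross3 (a τ) (pc Z τ) j) i)^2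
          ≤ ∑ j, (k * cross3 (a τ) (pc Z τ) j)^2 := h1
        _ = k^2 * ∑ j, (cross3 (a τ) (pc Z τ) j)^2 := h2
        _ ≤ k^2 * Vff Z s := mul_le_mul_of_nonneg_left (le_trans h3 h4) (sq_nonneg k)
    have hsum2 : ∑ i, (cross3 (cross3 (a τ) (ω τ)) (qc Z τ) i
        + cross3 (a τ) (fun j => k * cross3 (a τ) (pc Z τ) j) i)^2
        ≤ 2 * (∑ i, (cross3 (cross3 (a τ) (ω τ)) (qc Z τ) i)^2)
          + 2 * (∑ i, (cross3 (a τ) (fun j => k * cross3 (a τ) (pc Z τ) j) i)^2) := by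
      rw [Finset.mul_sum, Finset.mul_sum, ← Finset.sum_add_distrib]
      apply Finset.sum_le_sum
      intro i _
      nlinarith [sq_nonneg (cross3 (cross3 (a τ) (ω τ)) (qc Z τ) i
        - cross3 (a τ) (fun j => k * cross3 (a τ) (pc Z τ) j) i)]
    have h3 : nxf Z τ ≤ θ^2*Vff Z s := hpt τ hτ
    have hM₂0 : 0 ≤ M₂ := by rw [hM₂]; positivity
    have hposb : 0 ≤ θ*(M₂+1)*Vff Z s/2 := by
      nlinarith [mul_nonneg (mul_nonneg hθ0.le (by linarith : (0:ℝ) ≤ M₂+1)) hVs0]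
    apply abs_le_of_sq_le_sq3 _ hposb
    nlinarith [hnx0 τ, hVs0, sq_nonneg (M₂ - 1), mul_nonneg hVs0 hVs0,
      Finset.sum_nonneg (fun i (_ : i ∈ (Finset.univ : Finset (Fin 3))) =>
        sq_nonneg (cross3 (cross3 (a τ) (ω τ)) (qc Z τ) i
          + cross3 (a τ) (fun j => k * cross3 (a τ) (pc Z τ) j) i)), sq_nonneg θ,
      mul_nonneg (mul_nonneg hθ0.le hθ0.le) (mul_nonneg hVs0 hVs0)]
  -- FTC for G
  have hftc : ∫ τ in s..(s+T), (DWf a ω k Z τ + k * nwf a Z τ - k * Gf a Z τ)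
      = Gf a Z (s+T) - Gf a Z s := by
    apply integral_eq_sub_of_hasDerivAt (fun τ _ => hGd τ)
    exact ((hcDW.add (continuous_const.mul hcnw)).sub (continuous_const.mul hcG)).intervalIntegrable _ _
  have hsplit : ∫ τ in s..(s+T), (DWf a ω k Z τ + k * nwf a Z τ - k * Gf a Z τ)
      = (∫ τ in s..(s+T), (DWf a ω k Z τ - k * Gf a Z τ)) + k * ∫ τ in s..(s+T), nwf a Z τ := by
    have i1 : IntervalIntegrable (fun τ => DWf a ω k Z τ - k*Gf a Z τ) volume s (s+T) :=
      (hcDW.sub (continuous_const.mul hcG)).intervalIntegrable _ _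
    have i2 : IntervalIntegrable (fun τ => k * nwf a Z τ) volume s (s+T) :=
      (continuous_const.mul hcnw).intervalIntegrable _ _
    have heq : (fun τ => DWf a ω k Z τ + k * nwf a Z τ - k * Gf a Z τ)
        = fun τ => (DWf a ω k Z τ - k*Gf a Z τ) + k * nwf a Z τ := by
      funext τ; ring
    rw [heq, integral_add i1 i2, intervalIntegral.integral_const_mul]
  have hlbint : -(T*(θ*(M₂+1)*Vff Z s/2 + k*(θ*Vff Z s)))
      ≤ ∫ τ in s..(s+T), (DWf a ω k Z τ - k * Gf a Z τ) := by
    have hbd : ∀ τ ∈ Set.Icc s (s+T),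
        -(θ*(M₂+1)*Vff Z s/2 + k*(θ*Vff Z s)) ≤ DWf a ω k Z τ - k * Gf a Z τ := by
      intro τ hτ
      have h1 := abs_le.mp (hDWbD τ hτ)
      have h2 := abs_le.mp (hGbD τ hτ)
      nlinarith [h1.1, h2.2]
    calc -(T*(θ*(M₂+1)*Vff Z s/2 + k*(θ*Vff Z s)))
        = ∫ _ in s..(s+T), (-(θ*(M₂+1)*Vff Z s/2 + k*(θ*Vff Z s))) := by
          rw [intervalIntegral.integral_const]; simp; ring
      _ ≤ ∫ τ in s..(s+T), (DWf a ω k Z τ - k * Gf a Z τ) := by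
          apply integral_mono_on hss intervalIntegrable_const
            ((hcDW.sub (continuous_const.mul hcG)).intervalIntegrable _ _) hbd
  have hΔG : Gf a Z (s+T) - Gf a Z s ≤ 2*(θ*Vff Z s) := by
    have h1 := abs_le.mp (hGbD (s+T) ⟨hss, le_refl _⟩)
    have h2 := abs_le.mp (hGbD s ⟨le_refl _, hss⟩)
    linarith [h1.2, h2.1]
  have hnwint : ∫ τ in s..(s+T), nwf a Z τ ≤ K₄*θ*Vff Z s := by
    have h1 : k * ∫ τ in s..(s+T), nwf a Z τ
        ≤ 2*(θ*Vff Z s) + T*(θ*(M₂+1)*Vff Z s/2 + k*(θ*Vff Z s)) := by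
      have := hftc
      rw [hsplit] at this
      linarith [hlbint, hΔG]
    have h2 : k * (K₄*θ*Vff Z s) = θ*Vff Z s*(2 + T*((M₂+1)/2 + k)) := by
      rw [hK₄]; field_simp
    have h3 : 2*(θ*Vff Z s) + T*(θ*(M₂+1)*Vff Z s/2 + k*(θ*Vff Z s))
        = θ*Vff Z s*(2 + T*((M₂+1)/2 + k)) := by ring
    have h4 : k * ∫ τ in s..(s+T), nwf a Z τ ≤ k * (K₄*θ*Vff Z s) := by
      rw [h2]; linarith [h1, h3]
    exact le_of_mul_le_mul_left h4 hk
  -- Step 4 : persistent excitation contradiction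
  have hPE' := PE_lower hT hPE hacont s (qc Z s)
  have hptw : ∀ τ ∈ Set.Icc s (s+T),
      ∑ i, (cross3 (a τ) (qc Z s) i)^2
        ≤ 2*nwf a Z τ + 6*(k^2*θ^2*T^2*Vff Z s) := by
    intro τ hτ
    have hsq : ∀ i, (cross3 (a τ) (qc Z s) i)^2
        ≤ 2*(Wf a Z τ i)^2 + 2*(cross3 (a τ) (fun j => qc Z s j - qc Z τ j) i)^2 := by
      intro i
      have hd := cross3_sub_right (a τ) (qc Z s) (qc Z τ) i
      have hWeq : Wf a Z τ i = cross3 (a τ) (qc Z τ) i := rfl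
      rw [hWeq, hd]
      nlinarith [sq_nonneg (cross3 (a τ) (qc Z τ) i
        - cross3 (a τ) (fun j => qc Z s j - qc Z τ j) i)]
    have hd2 : ∑ i, (cross3 (a τ) (fun j => qc Z s j - qc Z τ j) i)^2
        ≤ 3*(k^2*θ^2*T^2*Vff Z s) := by
      have h1 := cross3_sq_le (a τ) (fun j => qc Z s j - qc Z τ j)
      rw [han τ, one_mul] at h1
      have h2 : ∑ j, (qc Z s j - qc Z τ j)^2 = ∑ j, (qc Z τ j - qc Z s j)^2 := by
        apply Finset.sum_congr rfl; intro j _; ring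
      calc ∑ i, (cross3 (a τ) (fun j => qc Z s j - qc Z τ j) i)^2
          ≤ ∑ j, (qc Z s j - qc Z τ j)^2 := h1
        _ = ∑ j, (qc Z τ j - qc Z s j)^2 := h2
        _ ≤ 3*(k^2*θ^2*T^2*Vff Z s) := hΔqsq τ hτ
    calc ∑ i, (cross3 (a τ) (qc Z s) i)^2
        ≤ ∑ i, (2*(Wf a Z τ i)^2 + 2*(cross3 (a τ) (fun j => qc Z s j - qc Z τ j) i)^2) :=
          Finset.sum_le_sum (fun i _ => hsq i)
      _ = 2*nwf a Z τ + 2*∑ i, (cross3 (a τ) (fun j => qc Z s j - qc Z τ j) i)^2 := by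
          rw [Finset.sum_add_distrib]
          unfold nwf
          rw [Finset.mul_sum, Finset.mul_sum]
      _ ≤ 2*nwf a Z τ + 6*(k^2*θ^2*T^2*Vff Z s) := by linarith [hd2]
  have hint4 : ∫ τ in s..(s+T), ∑ i, (cross3 (a τ) (qc Z s) i)^2
      ≤ 2*(K₄*θ*Vff Z s) + T*(6*(k^2*θ^2*T^2*Vff Z s)) := by
    have hcl : Continuous fun τ => ∑ i, (cross3 (a τ) (qc Z s) i)^2 := by
      apply continuous_finset_sum
      intro i _
      exact (cont_cross3 hca (fun j => (continuous_const : Continuous fun _ : ℝ => qc Z s j)) i).pow 2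
    have hcr : Continuous fun τ => 2*nwf a Z τ + 6*(k^2*θ^2*T^2*Vff Z s) :=
      (continuous_const.mul hcnw).add continuous_const
    calc ∫ τ in s..(s+T), ∑ i, (cross3 (a τ) (qc Z s) i)^2
        ≤ ∫ τ in s..(s+T), (2*nwf a Z τ + 6*(k^2*θ^2*T^2*Vff Z s)) := by
          apply integral_mono_on hss (hcl.intervalIntegrable _ _)
            (hcr.intervalIntegrable _ _) hptw
      _ = 2*(∫ τ in s..(s+T), nwf a Z τ) + T*(6*(k^2*θ^2*T^2*Vff Z s)) := by
          rw [integral_add (f := fun τ => 2 * nwf a Z τ) ((continuous_const.mul hcnw).intervalIntegrable _ _)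
            (intervalIntegrable_const), intervalIntegral.integral_const_mul, intervalIntegral.integral_const]
          simp
          try ring
      _ ≤ 2*(K₄*θ*Vff Z s) + T*(6*(k^2*θ^2*T^2*Vff Z s)) := by linarith [hnwint]
  have hnys : (1 - θ^2)*Vff Z s ≤ nyf Z s := by
    have h1 : nxf Z s ≤ θ^2*Vff Z s := hpt s ⟨le_refl _, hss⟩
    have h2 : Vff Z s = nxf Z s + nyf Z s := rfl
    linarith
  have hnyeq : (∑ i, (qc Z s i)^2) = nyf Z s := rfl
  rw [hnyeq] at hPE'
  -- final contradiction
  have hfin1 : μ*T*((1-θ^2)*Vff Z s) ≤ 2*(K₄*θ*Vff Z s) + 6*k^2*T^3*θ^2*Vff Z s := by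
    have := le_trans hPE' hint4
    have hμT : 0 ≤ μ*T := by positivity
    nlinarith [mul_le_mul_of_nonneg_left hnys hμT]
  have hb1 : 2*(K₄*θ*Vff Z s) ≤ (μ*T/8)*Vff Z s := by
    have := mul_le_mul_of_nonneg_right hC3 hVs0
    nlinarith
  have hb2 : 6*k^2*T^3*θ^2*Vff Z s ≤ (μ*T/8)*Vff Z s := by
    have := mul_le_mul_of_nonneg_right hC4 hVs0
    nlinarith
  have hθ2 : θ^2 ≤ 1/4 := by nlinarith
  nlinarith [mul_pos (mul_pos hμ0 hT) hVpos]


set_option maxHeartbeats 2000000 in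
/-- uniform exponential decay for the LTV system `Z' = k A(t) Z`
under persistent excitation. -/
theorem ltv_exponential_stability
    (ωmax k T μ : ℝ) (hωmax : 0 < ωmax) (hk : 0 < k) (hT : 0 < T)
    (hμ0 : 0 < μ) (hμ1 : μ < 1)
    (ω : ℝ → Fin 3 → ℝ) (hωc : Continuous ω) (hωb : ∀ t, enorm3 (ω t) ≤ ωmax)
    (a : ℝ → Fin 3 → ℝ) (hau : ∀ t, enorm3 (a t) = 1)
    (had : ∀ t, HasDerivAt a (cross3 (a t) (ω t)) t)
    (hPE : PE a T μ) :
    ∃ c : ℝ, 0 < c ∧ c < 1 ∧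
      ∀ Z : ℝ → Fin 3 ⊕ Fin 3 → ℝ,
        (∀ t, HasDerivAt Z (k • (Amat (a t)).mulVec (Z t)) t) →
        ∀ (t₀ : ℝ) (N : ℕ), ∀ t ∈ Set.Icc (t₀ + N * T) (t₀ + (N + 1) * T),
          nrm6sq (Z t) ≤ c ^ N * nrm6sq (Z t₀) := by
  -- choice of constants
  set M₂ : ℝ := 2*(ωmax^2+k^2) with hM₂def
  set K₄ : ℝ := (2 + T*((M₂+1)/2 + k))/k with hK₄def
  have hM₂pos : 0 < M₂ := by rw [hM₂def]; positivity
  have hK₄pos : 0 < K₄ := by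
    rw [hK₄def]
    apply div_pos _ hk
    nlinarith [hM₂pos, hT, hk]
  set θ : ℝ := min (1/2) (min (μ*T/(16*(K₄+1))) (μ/(48*(k^2*T^2)+1))) with hθdef
  have hθ0 : 0 < θ := by
    apply lt_min (by norm_num)
    apply lt_min
    · apply div_pos (by positivity) (by nlinarith [hK₄pos])
    · apply div_pos hμ0 (by positivity)
  have hθhalf : θ ≤ 1/2 := min_le_left _ _
  have hC3 : 2*θ*K₄ ≤ μ*T/8 := by
    have h1 : θ ≤ μ*T/(16*(K₄+1)) := le_trans (min_le_right _ _) (min_le_left _ _)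
    have h1' : θ*(16*(K₄+1)) ≤ μ*T := (le_div_iff₀ (by nlinarith [hK₄pos])).mp h1
    nlinarith [hθ0.le]
  have hC4 : 6*k^2*T^3*θ^2 ≤ μ*T/8 := by
    have h2 : θ ≤ μ/(48*(k^2*T^2)+1) := le_trans (min_le_right _ _) (min_le_right _ _)
    have h2' : θ*(48*(k^2*T^2)+1) ≤ μ := (le_div_iff₀ (by positivity)).mp h2
    have hq1 : 0 ≤ 6*k^2*T^3 := by positivity
    have hq2 : θ^2 ≤ θ := by nlinarith [hθ0.le, hθhalf]
    have hq3 : 6*k^2*T^3*θ^2 ≤ 6*k^2*T^3*θ := by nlinarith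
    have hq4 : T*(θ*(48*(k^2*T^2)+1)) ≤ T*μ := by nlinarith [hT.le]
    nlinarith [mul_nonneg hT.le hθ0.le]
  set hstep : ℝ := min (T/2) (θ^2/(8*k)) with hstepdef
  have hh0 : 0 < hstep := lt_min (by linarith) (div_pos (pow_pos hθ0 2) (by linarith))
  have hhT : hstep ≤ T/2 := min_le_left _ _
  have hhk : 8*k*hstep ≤ θ^2 := by
    have h3 : hstep ≤ θ^2/(8*k) := min_le_right _ _
    have h3' : hstep*(8*k) ≤ θ^2 := (le_div_iff₀ (by linarith)).mp h3
    linarith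
  set ε : ℝ := θ^2*hstep/2 with hεdef
  have hεpos : 0 < ε := by rw [hεdef]; positivity
  set ε' : ℝ := min ε (1/(8*k)) with hε'def
  have hε'0 : 0 < ε' := lt_min hεpos (by positivity)
  have hε'ε : ε' ≤ ε := min_le_left _ _
  have hc0 : 0 < 1 - 2*k*ε' := by
    have h4 : ε' ≤ 1/(8*k) := min_le_right _ _
    have h4' : ε'*(8*k) ≤ 1 := (le_div_iff₀ (by linarith)).mp h4
    nlinarith
  have hc1 : 1 - 2*k*ε' < 1 := by nlinarith [mul_pos hk hε'0]
  refine ⟨1 - 2*k*ε', hc0, hc1, ?_⟩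
  intro Z hZ t₀ N t ht
  -- basic facts about a and ω
  have had' : ∀ (i : Fin 3) (t : ℝ), HasDerivAt (fun t => a t i) (cross3 (a t) (ω t) i) t :=
    fun i t => hasDerivAt_pi.1 (had t) i
  have han : ∀ t, ∑ i, (a t i)^2 = 1 := by
    intro t
    have h1 := hau t
    simp only [enorm3] at h1
    exact Real.sqrt_eq_one.mp h1
  have hωn : ∀ t, ∑ i, (ω t i)^2 ≤ ωmax^2 := by
    intro t
    have h1 := hωb t
    simp only [enorm3] at h1
    have h2 : 0 ≤ ∑ i, (ω t i)^2 := Finset.sum_nonneg fun i _ => sq_nonneg _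
    nlinarith [Real.sq_sqrt h2, Real.sqrt_nonneg (∑ i, (ω t i)^2), hωmax.le]
  -- component derivatives of the solution
  have hP : ∀ (i : Fin 3) (t : ℝ), HasDerivAt (fun t => pc Z t i)
      (k * (-(pc Z t i) + cross3 (a t) (qc Z t) i)) t := by
    intro i t
    have h0 := hasDerivAt_pi.1 (hZ t) (Sum.inl i)
    have hval : (k • (Amat (a t)).mulVec (Z t)) (Sum.inl i)
        = k * (-(pc Z t i) + cross3 (a t) (qc Z t) i) := by
      rw [Pi.smul_apply, smul_eq_mul, Amat_mulVec_inl]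
      rfl
    rw [hval] at h0
    exact h0
  have hQ : ∀ (i : Fin 3) (t : ℝ), HasDerivAt (fun t => qc Z t i)
      (k * cross3 (a t) (pc Z t) i) t := by
    intro i t
    have h0 := hasDerivAt_pi.1 (hZ t) (Sum.inr i)
    have hval : (k • (Amat (a t)).mulVec (Z t)) (Sum.inr i)
        = k * cross3 (a t) (pc Z t) i := by
      rw [Pi.smul_apply, smul_eq_mul, Amat_mulVec_inr]
      rfl
    rw [hval] at h0
    exact h0
  -- derivative and monotonicity of the energy
  have hVd : ∀ t, HasDerivAt (Vff Z) (-(2*k) * nxf Z t) t := by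
    intro t
    have h1 := HasDerivAt.fun_sum (u := Finset.univ) (fun i (_ : i ∈ Finset.univ) => (hP i t).pow 2)
    have h2 := HasDerivAt.fun_sum (u := Finset.univ) (fun i (_ : i ∈ Finset.univ) => (hQ i t).pow 2)
    have h3 := h1.add h2
    unfold Vff nxf nyf
    refine h3.congr_deriv ?_
    simp [cross3, Fin.sum_univ_three, pow_one]
    ring
  have hnx0 : ∀ t, 0 ≤ nxf Z t := fun t => Finset.sum_nonneg fun i _ => sq_nonneg _
  have hny0 : ∀ t, 0 ≤ nyf Z t := fun t => Finset.sum_nonneg fun i _ => sq_nonneg _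
  have hmono : Antitone (Vff Z) := by
    apply antitone_of_deriv_nonpos (fun t => (hVd t).differentiableAt)
    intro t
    rw [(hVd t).deriv]
    nlinarith [mul_nonneg hk.le (hnx0 t)]
  have hcP : ∀ i, Continuous fun t => pc Z t i :=
    fun i => Differentiable.continuous (fun t => (hP i t).differentiableAt)
  have hcnx : Continuous (nxf Z) := by
    unfold nxf; exact continuous_finset_sum _ fun i _ => (hcP i).pow 2
  -- per-period decay
  have key : ∀ s : ℝ, Vff Z (s+T) ≤ (1 - 2*k*ε') * Vff Z s := by
    intro s
    have hElow := per_period ωmax k T μ hk hT hμ0 ω a hωc hωn han had' hPE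
      M₂ K₄ θ hstep ε hM₂def hK₄def hθ0 hθhalf hC3 hC4 hh0 hhT hhk hεdef
      Z hP hQ hmono s
    have hftcV : ∫ τ in s..(s+T), (-(2*k) * nxf Z τ) = Vff Z (s+T) - Vff Z s := by
      apply integral_eq_sub_of_hasDerivAt (fun τ _ => hVd τ)
      exact (continuous_const.mul hcnx).intervalIntegrable _ _
    rw [intervalIntegral.integral_const_mul] at hftcV
    have hVs0 : 0 ≤ Vff Z s := by unfold Vff; linarith [hnx0 s, hny0 s]
    have hE'low : ε' * Vff Z s ≤ ∫ τ in s..(s+T), nxf Z τ := by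
      calc ε' * Vff Z s ≤ ε * Vff Z s := mul_le_mul_of_nonneg_right hε'ε hVs0
        _ ≤ ∫ τ in s..(s+T), nxf Z τ := hElow
    nlinarith [mul_le_mul_of_nonneg_left hE'low (by linarith : (0:ℝ) ≤ 2*k)]
  -- iterate
  have hVn : ∀ n : ℕ, Vff Z (t₀ + n*T) ≤ (1 - 2*k*ε')^n * Vff Z t₀ := by
    intro n
    induction n with
    | zero => simp
    | succ n ih =>
      have h1 := key (t₀ + n*T)
      have h2 : t₀ + ((n:ℕ)+1 : ℕ)*T = (t₀ + (n:ℕ)*T) + T := by push_cast; ring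
      rw [h2]
      calc Vff Z ((t₀ + (n:ℕ)*T) + T) ≤ (1 - 2*k*ε') * Vff Z (t₀+(n:ℕ)*T) := h1
        _ ≤ (1 - 2*k*ε') * ((1 - 2*k*ε')^n * Vff Z t₀) :=
            mul_le_mul_of_nonneg_left ih hc0.le
        _ = (1 - 2*k*ε')^(n+1) * Vff Z t₀ := by ring
  obtain ⟨ht1, ht2⟩ := ht
  have hmt : Vff Z t ≤ Vff Z (t₀ + N*T) := hmono ht1
  have he1 : nrm6sq (Z t) = Vff Z t := by
    simp [nrm6sq, Vff, nxf, nyf, pc, qc, Fintype.sum_sum_type]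
  have he2 : nrm6sq (Z t₀) = Vff Z t₀ := by
    simp [nrm6sq, Vff, nxf, nyf, pc, qc, Fintype.sum_sum_type]
  rw [he1, he2]
  exact le_trans hmt (hVn N)


end
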